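/- With the DPnP kernel definitions, define the auxiliary kernel K_aux(x, x') = ∫ K_DDS(x, z) K_PCS(z, x') dz and the density μ_η(x) = p̃_η(x) e^{L(x)} / ∫ p̃_η e^{L} (the normalizing integral equals ∫ p⋆ q̃_η and is finite and positive). Then: (i) K_aux is reversible with respect to μ_η, i.e., μ_η(x) K_aux(x, x') = μ_η(x') K_aux(x', x) for all x, x'; and (ii) μ_η pushes forward under K_DDS to π_η: ∫ μ_η(x) K_DDS(x, x') dx = π_η(x') for every x', where π_η(x) = p⋆(x) q̃_η(x) / ∫ p⋆ q̃_η. -/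

import Mathlib

open MeasureTheory

/-- `q̃_η(x) = ∫ e^{L(x')} e^{−‖x−x'‖²/(2η²)} dx'`. -/
noncomputable def qEta {d : ℕ} (L : EuclideanSpace ℝ (Fin d) → ℝ) (η : ℝ)
    (x : EuclideanSpace ℝ (Fin d)) : ℝ :=
  ∫ x', Real.exp (L x') * Real.exp (-‖x - x'‖ ^ 2 / (2 * η ^ 2))

/-- `p̃_η(x) = ∫ p⋆(x') e^{−‖x−x'‖²/(2η²)} dx'`. -/
noncomputable def pEta {d : ℕ} (p : EuclideanSpace ℝ (Fin d) → ℝ) (η : ℝ)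
    (x : EuclideanSpace ℝ (Fin d)) : ℝ :=
  ∫ x', p x' * Real.exp (-‖x - x'‖ ^ 2 / (2 * η ^ 2))

/-- The proximal consistency sampler kernel
`K_PCS(x, x') = e^{L(x') − ‖x'−x‖²/(2η²)} / q̃_η(x)`. -/
noncomputable def KPCS {d : ℕ} (L : EuclideanSpace ℝ (Fin d) → ℝ) (η : ℝ)
    (x x' : EuclideanSpace ℝ (Fin d)) : ℝ :=
  Real.exp (L x' - ‖x' - x‖ ^ 2 / (2 * η ^ 2)) / qEta L η x

/-- The denoising diffusion sampler kernel
`K_DDS(x, x') = p⋆(x') e^{−‖x'−x‖²/(2η²)} / p̃_η(x)`. -/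
noncomputable def KDDS {d : ℕ} (p : EuclideanSpace ℝ (Fin d) → ℝ) (η : ℝ)
    (x x' : EuclideanSpace ℝ (Fin d)) : ℝ :=
  p x' * Real.exp (-‖x' - x‖ ^ 2 / (2 * η ^ 2)) / pEta p η x

/-- The composite DPnP kernel `K_DPnP(x, x') = ∫ K_PCS(x, z) K_DDS(z, x') dz`. -/
noncomputable def KDPnP {d : ℕ} (p L : EuclideanSpace ℝ (Fin d) → ℝ) (η : ℝ)
    (x x' : EuclideanSpace ℝ (Fin d)) : ℝ :=
  ∫ z, KPCS L η x z * KDDS p η z x'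

/-- Action of a Markov transition density on a probability density:
`(p ∘ K)(x') = ∫ p(x) K(x, x') dx`. -/
noncomputable def applyKernel {d : ℕ} (K : EuclideanSpace ℝ (Fin d) → EuclideanSpace ℝ (Fin d) → ℝ)
    (p : EuclideanSpace ℝ (Fin d) → ℝ) : EuclideanSpace ℝ (Fin d) → ℝ :=
  fun x' => ∫ x, p x * K x x'

/-- Total variation distance between two densities: `TV(p, q) = ∫ |p(x) − q(x)| dx`. -/
noncomputable def tvDist {d : ℕ} (p q : EuclideanSpace ℝ (Fin d) → ℝ) : ℝ :=
  ∫ x, |p x - q x|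

/-- Chi-squared divergence: `χ²(p ‖ q) = ∫ (p(x) − q(x))² / q(x) dx`. -/
noncomputable def chiSq {d : ℕ} (p q : EuclideanSpace ℝ (Fin d) → ℝ) : ℝ :=
  ∫ x, (p x - q x) ^ 2 / q x

/-- The stationary density `π_η(x) = p⋆(x) q̃_η(x) / ∫ p⋆ q̃_η`. -/
noncomputable def piEta {d : ℕ} (p L : EuclideanSpace ℝ (Fin d) → ℝ) (η : ℝ)
    (x : EuclideanSpace ℝ (Fin d)) : ℝ :=
  p x * qEta L η x / ∫ y, p y * qEta L η y

/-- The auxiliary kernel `K_aux(x, x') = ∫ K_DDS(x, z) K_PCS(z, x') dz`. -/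
noncomputable def KAux {d : ℕ} (p L : EuclideanSpace ℝ (Fin d) → ℝ) (η : ℝ)
    (x x' : EuclideanSpace ℝ (Fin d)) : ℝ :=
  ∫ z, KDDS p η x z * KPCS L η z x'

/-- The auxiliary density `μ_η(x) = p̃_η(x) e^{L(x)} / ∫ p̃_η e^{L}`. -/
noncomputable def muEta {d : ℕ} (p L : EuclideanSpace ℝ (Fin d) → ℝ) (η : ℝ)
    (x : EuclideanSpace ℝ (Fin d)) : ℝ :=
  pEta p η x * Real.exp (L x) / ∫ y, pEta p η y * Real.exp (L y)

section helpers

lemma gauss_int0 {d : ℕ} (b : ℝ) (hb : 0 < b) :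
    Integrable (fun v : EuclideanSpace ℝ (Fin d) => Real.exp (-b * ‖v‖ ^ 2)) := by
  have h := (GaussianFourier.integrable_cexp_neg_mul_sq_norm_add
    (V := EuclideanSpace ℝ (Fin d)) (b := (b:ℂ)) (by simpa using hb) 0 0).norm
  refine h.congr (Filter.Eventually.of_forall fun v => ?_)
  simp [Complex.norm_exp, ← Complex.ofReal_pow]

lemma gauss_int {d : ℕ} {η : ℝ} (hη : 0 < η) (y : EuclideanSpace ℝ (Fin d)) :
    Integrable (fun x : EuclideanSpace ℝ (Fin d) =>
      Real.exp (-‖x - y‖ ^ 2 / (2 * η ^ 2))) := by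
  have hb : 0 < (2 * η ^ 2)⁻¹ := by positivity
  have h := (gauss_int0 (2 * η ^ 2)⁻¹ hb).comp_sub_right y
  refine h.congr (Filter.Eventually.of_forall fun x => ?_)
  show Real.exp (-(2 * η ^ 2)⁻¹ * ‖x - y‖ ^ 2) = Real.exp (-‖x - y‖ ^ 2 / (2 * η ^ 2))
  congr 1
  ring

end helpers


/-- The normalizing integral of `μ_η` is finite and positive and equals `∫ p⋆ q̃_η`;
`K_aux` is reversible with respect to `μ_η`; and `μ_η` pushes forward under `K_DDS` to `π_η`. -/
theorem stmt7 {d : ℕ} (p L : EuclideanSpace ℝ (Fin d) → ℝ)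
    (hpm : Measurable p) (hp0 : ∀ x, 0 ≤ p x) (hp1 : ∫ x, p x = 1)
    (hLm : Measurable L) (hLb : BddAbove (Set.range L))
    (η : ℝ) (hη : 0 < η) :
    Integrable (fun x => pEta p η x * Real.exp (L x))
      ∧ (∫ x, pEta p η x * Real.exp (L x)) = (∫ x, p x * qEta L η x)
      ∧ (0 < ∫ x, pEta p η x * Real.exp (L x))
      ∧ (∀ x x', muEta p L η x * KAux p L η x x' = muEta p L η x' * KAux p L η x' x)
      ∧ (∀ x', ∫ x, muEta p L η x * KDDS p η x x' = piEta p L η x') := by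
  classical
  obtain ⟨C, hC⟩ := hLb
  have hLC : ∀ x, L x ≤ C := fun x => hC ⟨x, rfl⟩
  have hpInt : Integrable p := integrable_of_integral_eq_one hp1
  have hg_nonneg : ∀ a b : EuclideanSpace ℝ (Fin d),
      (0:ℝ) ≤ Real.exp (-‖a - b‖ ^ 2 / (2 * η ^ 2)) := fun _ _ => (Real.exp_pos _).le
  have hg_le_one : ∀ a b : EuclideanSpace ℝ (Fin d),
      Real.exp (-‖a - b‖ ^ 2 / (2 * η ^ 2)) ≤ 1 := by
    intro a b
    apply Real.exp_le_one_iff.2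
    apply div_nonpos_of_nonpos_of_nonneg
    · simp [sq_nonneg]
    · positivity
  have hgm : Measurable fun q : EuclideanSpace ℝ (Fin d) × EuclideanSpace ℝ (Fin d) =>
      Real.exp (-‖q.1 - q.2‖ ^ 2 / (2 * η ^ 2)) := by
    have : Continuous fun q : EuclideanSpace ℝ (Fin d) × EuclideanSpace ℝ (Fin d) =>
        Real.exp (-‖q.1 - q.2‖ ^ 2 / (2 * η ^ 2)) := by continuity
    exact this.measurable
  -- positivity of pEta everywhere
  have hsupp_p : 0 < volume (Function.support p) := by
    rw [← integral_pos_iff_support_of_nonneg hp0 hpInt, hp1]; norm_num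
  have hpEta_pos : ∀ x, 0 < pEta p η x := by
    intro x
    have hmz : Measurable (fun z : EuclideanSpace ℝ (Fin d) =>
        p z * Real.exp (-‖x - z‖ ^ 2 / (2 * η ^ 2))) := by
      have hcont : Continuous (fun z : EuclideanSpace ℝ (Fin d) =>
          Real.exp (-‖x - z‖ ^ 2 / (2 * η ^ 2))) := by continuity
      exact hpm.mul hcont.measurable
    have hint : Integrable (fun z : EuclideanSpace ℝ (Fin d) =>
        p z * Real.exp (-‖x - z‖ ^ 2 / (2 * η ^ 2))) := by
      refine hpInt.mono hmz.aestronglyMeasurable (Filter.Eventually.of_forall fun z => ?_)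
      rw [Real.norm_eq_abs, Real.norm_eq_abs, abs_of_nonneg (hp0 z),
        abs_of_nonneg (mul_nonneg (hp0 z) (hg_nonneg x z))]
      calc p z * Real.exp (-‖x - z‖ ^ 2 / (2 * η ^ 2)) ≤ p z * 1 :=
            mul_le_mul_of_nonneg_left (hg_le_one x z) (hp0 z)
        _ = p z := mul_one _
    rw [show pEta p η x = ∫ z, p z * Real.exp (-‖x - z‖ ^ 2 / (2 * η ^ 2)) from rfl,
      integral_pos_iff_support_of_nonneg
        (fun z => mul_nonneg (hp0 z) (hg_nonneg x z)) hint]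
    have hss : Function.support (fun z : EuclideanSpace ℝ (Fin d) =>
        p z * Real.exp (-‖x - z‖ ^ 2 / (2 * η ^ 2))) = Function.support p := by
      ext z
      simp [Function.mem_support, (Real.exp_pos (-‖x - z‖ ^ 2 / (2 * η ^ 2))).ne']
    rw [hss]; exact hsupp_p
  have hpEta_ne : ∀ x, pEta p η x ≠ 0 := fun x => (hpEta_pos x).ne'
  -- product integrability
  set K := ∫ v : EuclideanSpace ℝ (Fin d), Real.exp (-‖v‖ ^ 2 / (2 * η ^ 2)) with hKdef
  have hshift : ∀ y : EuclideanSpace ℝ (Fin d),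
      (∫ x, Real.exp (-‖x - y‖ ^ 2 / (2 * η ^ 2))) = K := fun y =>
    integral_sub_right_eq_self
      (fun v : EuclideanSpace ℝ (Fin d) => Real.exp (-‖v‖ ^ 2 / (2 * η ^ 2))) y
  have hFm : AEStronglyMeasurable
      (fun q : EuclideanSpace ℝ (Fin d) × EuclideanSpace ℝ (Fin d) =>
        p q.2 * Real.exp (-‖q.1 - q.2‖ ^ 2 / (2 * η ^ 2)))
      (volume.prod volume) :=
    ((hpm.comp measurable_snd).mul hgm).aestronglyMeasurable
  have hFInt : Integrable
      (fun q : EuclideanSpace ℝ (Fin d) × EuclideanSpace ℝ (Fin d) =>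
        p q.2 * Real.exp (-‖q.1 - q.2‖ ^ 2 / (2 * η ^ 2)))
      (volume.prod volume) := by
    rw [integrable_prod_iff' hFm]
    constructor
    · exact Filter.Eventually.of_forall fun y => (gauss_int hη y).const_mul (p y)
    · have heq : (fun y : EuclideanSpace ℝ (Fin d) =>
          ∫ x, ‖p y * Real.exp (-‖x - y‖ ^ 2 / (2 * η ^ 2))‖) = fun y => p y * K := by
        funext y
        have habs : ∀ x : EuclideanSpace ℝ (Fin d),
            ‖p y * Real.exp (-‖x - y‖ ^ 2 / (2 * η ^ 2))‖
            = p y * Real.exp (-‖x - y‖ ^ 2 / (2 * η ^ 2)) := fun x => by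
          rw [Real.norm_eq_abs, abs_of_nonneg (mul_nonneg (hp0 y) (hg_nonneg x y))]
        simp only [habs]
        rw [integral_const_mul, hshift y]
      rw [heq]
      exact hpInt.mul_const K
  have hHInt : Integrable
      (fun q : EuclideanSpace ℝ (Fin d) × EuclideanSpace ℝ (Fin d) =>
        p q.2 * Real.exp (-‖q.1 - q.2‖ ^ 2 / (2 * η ^ 2)) * Real.exp (L q.1))
      (volume.prod volume) := by
    have hb : Integrable
        (fun q : EuclideanSpace ℝ (Fin d) × EuclideanSpace ℝ (Fin d) => Real.exp (L q.1) *
          (p q.2 * Real.exp (-‖q.1 - q.2‖ ^ 2 / (2 * η ^ 2)))) (volume.prod volume) := by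
      refine Integrable.bdd_mul (c := Real.exp C) hFInt
        ((Real.measurable_exp.comp (hLm.comp measurable_fst)).aestronglyMeasurable) ?_
      exact Filter.Eventually.of_forall (fun q => by
        rw [Real.norm_eq_abs, abs_of_nonneg (Real.exp_pos _).le]
        exact Real.exp_le_exp.2 (hLC q.1))
    refine hb.congr (Filter.Eventually.of_forall fun q => ?_)
    ring
  -- Part 1 : integrability
  have hA : Integrable (fun x : EuclideanSpace ℝ (Fin d) =>
      pEta p η x * Real.exp (L x)) := by
    have h1 := hHInt.integral_prod_left
    refine h1.congr (Filter.Eventually.of_forall fun x => ?_)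
    show (∫ y, p y * Real.exp (-‖x - y‖ ^ 2 / (2 * η ^ 2)) * Real.exp (L x))
        = pEta p η x * Real.exp (L x)
    rw [integral_mul_const]
    rfl
  -- Part 2 : value of the normalizing constant
  have hB : (∫ x, pEta p η x * Real.exp (L x)) = ∫ y, p y * qEta L η y := by
    have hswap := integral_integral_swap
      (f := fun x y : EuclideanSpace ℝ (Fin d) =>
        p y * Real.exp (-‖x - y‖ ^ 2 / (2 * η ^ 2)) * Real.exp (L x)) hHInt
    calc (∫ x, pEta p η x * Real.exp (L x))
        = ∫ x, ∫ y, p y * Real.exp (-‖x - y‖ ^ 2 / (2 * η ^ 2)) * Real.exp (L x) := by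
          congr 1; funext x; rw [integral_mul_const]; rfl
      _ = ∫ y, ∫ x, p y * Real.exp (-‖x - y‖ ^ 2 / (2 * η ^ 2)) * Real.exp (L x) := hswap
      _ = ∫ y, p y * qEta L η y := by
          congr 1; funext y
          have hr : ∀ x : EuclideanSpace ℝ (Fin d),
              p y * Real.exp (-‖x - y‖ ^ 2 / (2 * η ^ 2)) * Real.exp (L x)
              = p y * (Real.exp (L x) * Real.exp (-‖y - x‖ ^ 2 / (2 * η ^ 2))) := fun x => by
            rw [norm_sub_rev]; ring
          simp only [hr]
          rw [integral_const_mul]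
          rfl
  set Z := ∫ x, pEta p η x * Real.exp (L x) with hZdef
  -- Part 3 : positivity
  have hZpos : 0 < Z := by
    rw [hZdef, integral_pos_iff_support_of_nonneg
      (fun x => mul_nonneg (hpEta_pos x).le (Real.exp_pos _).le) hA]
    have hss : Function.support (fun x : EuclideanSpace ℝ (Fin d) =>
        pEta p η x * Real.exp (L x)) = Set.univ := by
      ext x
      simp [Function.mem_support, hpEta_ne x, (Real.exp_pos (L x)).ne']
    rw [hss]
    exact isOpen_univ.measure_pos volume Set.univ_nonempty
  have hZne : Z ≠ 0 := hZpos.ne'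
  have hmu : ∀ x, muEta p L η x = pEta p η x * Real.exp (L x) / Z := fun x => rfl
  -- the symmetric kernel S
  set S : EuclideanSpace ℝ (Fin d) → EuclideanSpace ℝ (Fin d) → ℝ := fun x x' =>
      ∫ z, p z * Real.exp (-‖z - x‖ ^ 2 / (2 * η ^ 2)) *
        Real.exp (-‖x' - z‖ ^ 2 / (2 * η ^ 2)) / qEta L η z with hSdef
  have hKAux : ∀ x x', KAux p L η x x' = (pEta p η x)⁻¹ * (Real.exp (L x') * S x x') := by
    intro x x'
    have hpt : ∀ z : EuclideanSpace ℝ (Fin d), KDDS p η x z * KPCS L η z x'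
        = (pEta p η x)⁻¹ * (Real.exp (L x') *
            (p z * Real.exp (-‖z - x‖ ^ 2 / (2 * η ^ 2)) *
              Real.exp (-‖x' - z‖ ^ 2 / (2 * η ^ 2)) / qEta L η z)) := by
      intro z
      show p z * Real.exp (-‖z - x‖ ^ 2 / (2 * η ^ 2)) / pEta p η x *
          (Real.exp (L x' - ‖x' - z‖ ^ 2 / (2 * η ^ 2)) / qEta L η z) = _
      have he : Real.exp (L x' - ‖x' - z‖ ^ 2 / (2 * η ^ 2))
          = Real.exp (L x') * Real.exp (-‖x' - z‖ ^ 2 / (2 * η ^ 2)) := by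
        rw [← Real.exp_add]; congr 1; ring
      rw [he]
      ring
    show (∫ z, KDDS p η x z * KPCS L η z x') = _
    simp only [hpt]
    rw [integral_const_mul, integral_const_mul]
  have hSsymm : ∀ x x', S x x' = S x' x := by
    intro x x'
    have hz : ∀ z : EuclideanSpace ℝ (Fin d),
        p z * Real.exp (-‖z - x‖ ^ 2 / (2 * η ^ 2)) *
          Real.exp (-‖x' - z‖ ^ 2 / (2 * η ^ 2)) / qEta L η z
        = p z * Real.exp (-‖z - x'‖ ^ 2 / (2 * η ^ 2)) *
          Real.exp (-‖x - z‖ ^ 2 / (2 * η ^ 2)) / qEta L η z := fun z => by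
      rw [norm_sub_rev z x, norm_sub_rev x' z]
      ring
    show (∫ z, p z * Real.exp (-‖z - x‖ ^ 2 / (2 * η ^ 2)) *
        Real.exp (-‖x' - z‖ ^ 2 / (2 * η ^ 2)) / qEta L η z) = _
    simp only [hz]
    rfl
  have h4 : ∀ x x', muEta p L η x * KAux p L η x x' = muEta p L η x' * KAux p L η x' x := by
    intro x x'
    rw [hmu, hmu, hKAux, hKAux, hSsymm x x']
    field_simp [hpEta_ne x, hpEta_ne x', hZne]
  have h5 : ∀ x', ∫ x, muEta p L η x * KDDS p η x x' = piEta p L η x' := by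
    intro x'
    have hpt : ∀ x : EuclideanSpace ℝ (Fin d), muEta p L η x * KDDS p η x x'
        = p x' / Z * (Real.exp (L x) * Real.exp (-‖x' - x‖ ^ 2 / (2 * η ^ 2))) := by
      intro x
      rw [hmu]
      show pEta p η x * Real.exp (L x) / Z *
          (p x' * Real.exp (-‖x' - x‖ ^ 2 / (2 * η ^ 2)) / pEta p η x) = _
      field_simp [hpEta_ne x, hZne]
    simp only [hpt]
    rw [integral_const_mul]
    show p x' / Z * qEta L η x' = piEta p L η x'
    show _ = p x' * qEta L η x' / ∫ y, p y * qEta L η y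
    rw [← hB]
    ring
  exact ⟨hA, hB, hZpos, h4, h5⟩
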